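/- Suppose λ > -2, λ ≠ 1, and u is a nontrivial real C²[0,1] solution of u'' + (2/ρ - 2λρ/(1-ρ²))u' - (2cos(2f₀)/(ρ²(1-ρ²)) + λ(1+λ)/(1-ρ²))u = 0 with u(0) = 0, and suppose u satisfies the integral identity ∫₀¹ (θ(ξ)/W(θ,χ)(ξ))·Q_λu(ξ)dξ = 0, where Q_λu(ρ) = (1/(1-ρ²))(2(λ-1)ρu'(ρ) + (λ(1+λ)-2)u(ρ)), θ(ρ) = 2ρ/(1+ρ²), W(θ,χ)(ρ) = -6/(ρ²(1-ρ²)). Then u' changes sign on (0,1). -/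

import Mathlib

open Set MeasureTheory intervalIntegral

noncomputable def f₀ : ℝ → ℝ := fun ρ => 2 * Real.arctan ρ

lemma key_pos (lam : ℝ) (h2 : -2 < lam) (h1 : lam ≠ 1)
    (u : ℝ → ℝ)
    (hu : ContDiffOn ℝ 2 u (Set.Icc (0:ℝ) 1))
    (hne : ∃ ρ ∈ Set.Icc (0:ℝ) 1, u ρ ≠ 0)
    (h0 : u 0 = 0)
    (hpos : ∀ ρ ∈ Set.Ioo (0:ℝ) 1, 0 ≤ deriv u ρ)
    (hint : ∫ ρ in (0:ℝ)..1,
        ((2 * ρ / (1 + ρ^2)) / (-6 / (ρ^2 * (1 - ρ^2)))) * ((1 / (1 - ρ^2))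
          * (2 * (lam - 1) * ρ * deriv u ρ + (lam * (1 + lam) - 2) * u ρ)) = 0) :
    False := by
  set w := derivWithin u (Set.Icc (0:ℝ) 1) with hwdef
  have hw : ContinuousOn w (Set.Icc (0:ℝ) 1) :=
    hu.continuousOn_derivWithin (uniqueDiffOn_Icc one_pos) (by norm_num)
  have hcu : ContinuousOn u (Set.Icc (0:ℝ) 1) := hu.continuousOn
  have hdw : ∀ ρ ∈ Set.Ioo (0:ℝ) 1, w ρ = deriv u ρ := fun ρ hρ =>
    derivWithin_of_mem_nhds (Icc_mem_nhds hρ.1 hρ.2)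
  have hmono : MonotoneOn u (Set.Icc (0:ℝ) 1) := by
    apply monotoneOn_of_deriv_nonneg (convex_Icc 0 1) hcu
    · rw [interior_Icc]
      exact (hu.differentiableOn (by norm_num)).mono Set.Ioo_subset_Icc_self
    · intro x hx
      rw [interior_Icc] at hx
      exact hpos x hx
  have hun : ∀ ρ ∈ Set.Icc (0:ℝ) 1, 0 ≤ u ρ := by
    intro ρ hρ
    have := hmono (Set.left_mem_Icc.mpr one_pos.le) hρ hρ.1
    rwa [h0] at this
  -- find p ∈ (0,1) with u p > 0
  obtain ⟨p, hp, hup⟩ : ∃ p ∈ Set.Ioo (0:ℝ) 1, 0 < u p := by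
    obtain ⟨ρ₀, hρ₀, hρ₀ne⟩ := hne
    have hρ₀pos : 0 < u ρ₀ := lt_of_le_of_ne (hun ρ₀ hρ₀) (Ne.symm hρ₀ne)
    rcases lt_or_eq_of_le hρ₀.2 with h | h
    · have hρ₀0 : 0 < ρ₀ := by
        rcases lt_or_eq_of_le hρ₀.1 with h' | h'
        · exact h'
        · exact absurd (by rw [← h']; exact h0) hρ₀ne
      exact ⟨ρ₀, ⟨hρ₀0, h⟩, hρ₀pos⟩
    · -- ρ₀ = 1, use continuity within
      subst h
      haveI : (nhdsWithin (1:ℝ) (Set.Ioo (0:ℝ) 1)).NeBot := by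
        apply mem_closure_iff_nhdsWithin_neBot.mp
        rw [closure_Ioo one_ne_zero.symm]
        exact hρ₀
      have hc1 : ContinuousWithinAt u (Set.Ioo (0:ℝ) 1) 1 :=
        (hcu 1 hρ₀).mono Set.Ioo_subset_Icc_self
      have hev : ∀ᶠ x in nhdsWithin (1:ℝ) (Set.Ioo (0:ℝ) 1), 0 < u x :=
        hc1.eventually_const_lt hρ₀pos
      obtain ⟨x, hx1, hx2⟩ := (hev.and self_mem_nhdsWithin).exists
      exact ⟨x, hx2, hx1⟩
  set G : ℝ → ℝ := fun ρ => ρ^3 / (1 + ρ^2) * (2 * ρ * w ρ + (lam + 2) * u ρ) with hGdef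
  have hGc : ContinuousOn G (Set.Icc (0:ℝ) 1) := by
    apply ContinuousOn.mul
    · exact (continuousOn_pow 3).div (continuousOn_const.add (continuousOn_pow 2))
        (fun x _ => by positivity)
    · exact ((continuousOn_const.mul continuousOn_id).mul hw).add (continuousOn_const.mul hcu)
  have hGint1 : IntervalIntegrable G volume 0 p := by
    apply (hGc.mono _).intervalIntegrable
    rw [Set.uIcc_of_le hp.1.le]
    exact Set.Icc_subset_Icc le_rfl hp.2.le
  have hGint2 : IntervalIntegrable G volume p 1 := by
    apply (hGc.mono _).intervalIntegrable
    rw [Set.uIcc_of_le hp.2.le]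
    exact Set.Icc_subset_Icc hp.1.le le_rfl
  have hG0 : ∀ x ∈ Set.Icc (0:ℝ) p, 0 ≤ G x := by
    intro x hx
    rcases eq_or_lt_of_le hx.1 with h | h
    · simp [hGdef, ← h]
    · have hxI : x ∈ Set.Ioo (0:ℝ) 1 := ⟨h, lt_of_le_of_lt hx.2 hp.2⟩
      apply mul_nonneg (by positivity)
      apply add_nonneg
      · apply mul_nonneg (by linarith [hxI.1])
        rw [hdw x hxI]; exact hpos x hxI
      · exact mul_nonneg (by linarith) (hun x ⟨hx.1, hxI.2.le⟩)
  have hGpos : ∀ x ∈ Set.Ioo p 1, 0 < G x := by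
    intro x hx
    have hx0 : 0 < x := lt_trans hp.1 hx.1
    have hxI : x ∈ Set.Ioo (0:ℝ) 1 := ⟨hx0, hx.2⟩
    have hux : 0 < u x := lt_of_lt_of_le hup
      (hmono ⟨hp.1.le, hp.2.le⟩ ⟨hx0.le, hx.2.le⟩ hx.1.le)
    apply mul_pos (by positivity)
    apply add_pos_of_nonneg_of_pos
    · apply mul_nonneg (by linarith)
      rw [hdw x hxI]; exact hpos x hxI
    · exact mul_pos (by linarith) hux
  have hIpos : 0 < ∫ x in (0:ℝ)..1, G x := by
    rw [← intervalIntegral.integral_add_adjacent_intervals hGint1 hGint2]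
    have A : 0 ≤ ∫ x in (0:ℝ)..p, G x := intervalIntegral.integral_nonneg hp.1.le hG0
    have B : 0 < ∫ x in p..1, G x :=
      intervalIntegral.intervalIntegral_pos_of_pos_on hGint2 hGpos hp.2
    linarith
  -- relate the hint integrand to G
  have hptwise : ∀ x ∈ Set.Ioo (0:ℝ) 1,
      ((2 * x / (1 + x^2)) / (-6 / (x^2 * (1 - x^2)))) * ((1 / (1 - x^2))
          * (2 * (lam - 1) * x * deriv u x + (lam * (1 + lam) - 2) * u x))
        = (1 - lam) / 3 * G x := by
    intro x hx
    have hx0 : x ≠ 0 := ne_of_gt hx.1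
    have hx2 : 1 - x^2 ≠ 0 := by nlinarith [hx.1, hx.2]
    have hx3 : 1 + x^2 ≠ 0 := by positivity
    rw [← hdw x hx]
    simp only [hGdef]
    field_simp
    ring
  have hcongr : ∀ᵐ x ∂(volume : Measure ℝ), x ∈ Set.uIoc (0:ℝ) 1 →
      ((2 * x / (1 + x^2)) / (-6 / (x^2 * (1 - x^2)))) * ((1 / (1 - x^2))
          * (2 * (lam - 1) * x * deriv u x + (lam * (1 + lam) - 2) * u x))
        = (1 - lam) / 3 * G x := by
    rw [MeasureTheory.ae_iff]
    refine measure_mono_null ?_ (measure_singleton (1:ℝ))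
    intro x hx
    simp only [Set.mem_setOf_eq, Classical.not_imp] at hx
    obtain ⟨hx1, hx2⟩ := hx
    rw [Set.uIoc_of_le zero_le_one] at hx1
    rcases lt_or_eq_of_le hx1.2 with h | h
    · exact absurd (hptwise x ⟨hx1.1, h⟩) hx2
    · exact h
  rw [intervalIntegral.integral_congr_ae hcongr,
    intervalIntegral.integral_const_mul] at hint
  have hc : (1 - lam) / 3 ≠ 0 := by
    intro h
    apply h1
    have : 1 - lam = 0 := by linarith [(div_eq_zero_iff.mp h)]
    linarith
  rcases mul_eq_zero.mp hint with h | h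
  · exact hc h
  · linarith

theorem derivative_changes_sign (lam : ℝ) (h2 : -2 < lam) (h1 : lam ≠ 1)
    (u : ℝ → ℝ)
    (hu : ContDiffOn ℝ 2 u (Set.Icc (0:ℝ) 1))
    (hne : ∃ ρ ∈ Set.Icc (0:ℝ) 1, u ρ ≠ 0)
    (h0 : u 0 = 0)
    (heq : ∀ ρ ∈ Set.Ioo (0:ℝ) 1,
      deriv (deriv u) ρ + (2 / ρ - 2 * lam * ρ / (1 - ρ^2)) * deriv u ρ
        - (2 * Real.cos (2 * f₀ ρ) / (ρ^2 * (1 - ρ^2)) + lam * (1 + lam) / (1 - ρ^2)) * u ρ = 0)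
    (hint : ∫ ρ in (0:ℝ)..1,
        ((2 * ρ / (1 + ρ^2)) / (-6 / (ρ^2 * (1 - ρ^2)))) * ((1 / (1 - ρ^2))
          * (2 * (lam - 1) * ρ * deriv u ρ + (lam * (1 + lam) - 2) * u ρ)) = 0) :
    ∃ a ∈ Set.Ioo (0:ℝ) 1, ∃ b ∈ Set.Ioo (0:ℝ) 1, deriv u a * deriv u b < 0 := by
  by_contra hcon
  push_neg at hcon
  by_cases hb : ∃ b ∈ Set.Ioo (0:ℝ) 1, deriv u b < 0
  · obtain ⟨b, hb1, hb2⟩ := hb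
    obtain ⟨ρ₀, hρ₀, hρ₀ne⟩ := hne
    apply key_pos lam h2 h1 (fun x => -u x) hu.neg
      ⟨ρ₀, hρ₀, by simpa using hρ₀ne⟩ (by simpa using h0)
    · intro ρ hρ
      have hprod := hcon ρ hρ b hb1
      have : deriv (fun x => -u x) ρ = -deriv u ρ := deriv.neg
      rw [this]
      nlinarith
    · have heqfun : (fun ρ : ℝ =>
          ((2 * ρ / (1 + ρ^2)) / (-6 / (ρ^2 * (1 - ρ^2)))) * ((1 / (1 - ρ^2))
            * (2 * (lam - 1) * ρ * deriv (fun x => -u x) ρ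
              + (lam * (1 + lam) - 2) * (fun x => -u x) ρ)))
          = fun ρ : ℝ => -(((2 * ρ / (1 + ρ^2)) / (-6 / (ρ^2 * (1 - ρ^2)))) * ((1 / (1 - ρ^2))
            * (2 * (lam - 1) * ρ * deriv u ρ + (lam * (1 + lam) - 2) * u ρ))) := by
        funext ρ
        simp only [deriv.fun_neg]
        ring
      rw [heqfun, intervalIntegral.integral_neg, hint, neg_zero]
  · push_neg at hb
    exact key_pos lam h2 h1 u hu ⟨hne.choose, hne.choose_spec⟩ h0 hb hint
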